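/- Let $g : \mathbb{R}^2 \to \mathbb{R}$ be continuous and suppose that for every $p \in \mathbb{R}^2$ and every $x = (x_1, x_2)$ with $x_1, x_2 > 0$ and every positive integer $n$: $\int_{[p_1, p_1+x_1]\times[p_2+x_2, p_2+2x_2]} g = \int_{[p_1+(n+1)x_1, p_1+(n+2)x_1]\times[p_2-nx_2, p_2-(n-1)x_2]} g$. Then $g$ is constant. -/

import Mathlib

open MeasureTheory

lemma rect_volume (a b c d : ℝ) :
    volume (Set.Icc a b ×ˢ Set.Icc c d) = ENNReal.ofReal (b - a) * ENNReal.ofReal (d - c) := by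
  rw [Measure.volume_eq_prod, Measure.prod_prod, Real.volume_Icc, Real.volume_Icc]

lemma rect_integral_bound (g : ℝ × ℝ → ℝ) (hg : Continuous g) (a b c d C v : ℝ)
    (hab : a ≤ b) (hcd : c ≤ d)
    (hbound : ∀ q ∈ Set.Icc a b ×ˢ Set.Icc c d, |g q - v| ≤ C) :
    |(∫ q in Set.Icc a b ×ˢ Set.Icc c d, g q) - v * ((b - a) * (d - c))| ≤
      C * ((b - a) * (d - c)) := by
  set S := Set.Icc a b ×ˢ Set.Icc c d with hS
  have hvol : volume S = ENNReal.ofReal ((b - a) * (d - c)) := by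
    rw [hS, rect_volume, ENNReal.ofReal_mul (by linarith)]
  have hfin : volume S < ⊤ := by rw [hvol]; exact ENNReal.ofReal_lt_top
  have hcompact : IsCompact S := (isCompact_Icc).prod isCompact_Icc
  have hmeas : MeasurableSet S := (measurableSet_Icc).prod measurableSet_Icc
  have hint : IntegrableOn g S := hg.continuousOn.integrableOn_compact hcompact
  have hintc : IntegrableOn (fun _ : ℝ × ℝ => v) S :=
    integrableOn_const hfin.ne
  have hconst : (∫ _ in S, v) = v * ((b - a) * (d - c)) := by
    rw [setIntegral_const, measureReal_def, hvol, ENNReal.toReal_ofReal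
      (mul_nonneg (by linarith) (by linarith)), smul_eq_mul]
    ring
  have hsub : (∫ q in S, g q) - v * ((b - a) * (d - c)) = ∫ q in S, (g q - v) := by
    rw [integral_sub hint hintc, hconst]
  rw [hsub]
  have := norm_setIntegral_le_of_norm_le_const (μ := volume) (s := S)
    (f := fun q => g q - v) (C := C) hfin
    (fun x hx => by simpa [Real.norm_eq_abs] using hbound x hx)
  calc |∫ q in S, (g q - v)| ≤ C * (volume S).toReal := this
    _ = C * ((b - a) * (d - c)) := by
        rw [hvol, ENNReal.toReal_ofReal (mul_nonneg (by linarith) (by linarith))]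

theorem continuous_constant_of_translated_rectangle_integrals
    (g : ℝ × ℝ → ℝ) (hg : Continuous g)
    (h : ∀ (p : ℝ × ℝ) (x1 x2 : ℝ), 0 < x1 → 0 < x2 → ∀ n : ℕ, 0 < n →
      (∫ q in Set.Icc p.1 (p.1 + x1) ×ˢ Set.Icc (p.2 + x2) (p.2 + 2 * x2), g q) =
        ∫ q in Set.Icc (p.1 + ((n : ℝ) + 1) * x1) (p.1 + ((n : ℝ) + 2) * x1) ×ˢ
            Set.Icc (p.2 - (n : ℝ) * x2) (p.2 - ((n : ℝ) - 1) * x2), g q) :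
    ∀ a b : ℝ × ℝ, g a = g b := by
  -- Key lemma: g r = g s whenever s is strictly to the lower-right of r.
  have key : ∀ r s : ℝ × ℝ, r.1 < s.1 → s.2 < r.2 → g r = g s := by
    intro r s hx hy
    by_contra hne
    set η := |g r - g s| / 4 with hη
    have hηpos : 0 < η := by
      have : g r - g s ≠ 0 := sub_ne_zero.2 hne
      have := abs_pos.2 this
      positivity
    obtain ⟨δr, hδr, hr⟩ := Metric.continuous_iff.mp hg r η hηpos
    obtain ⟨δs, hδs, hs⟩ := Metric.continuous_iff.mp hg s η hηpos
    set δ := min δr δs with hδ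
    have hδpos : 0 < δ := lt_min hδr hδs
    set u := s.1 - r.1 with hu
    set v := r.2 - s.2 with hv
    have hupos : 0 < u := by simp [hu]; linarith
    have hvpos : 0 < v := by simp [hv]; linarith
    obtain ⟨n, hn⟩ := exists_nat_gt (max u v / δ)
    set N := n + 1 with hN
    have hNpos : 0 < N := Nat.succ_pos n
    have hNgt : max u v / δ < (N : ℝ) + 1 := by
      push_cast [hN]; linarith
    have hN1 : (0:ℝ) < (N : ℝ) + 1 := by positivity
    set x1 := u / ((N : ℝ) + 1) with hx1
    set x2 := v / ((N : ℝ) + 1) with hx2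
    have hx1pos : 0 < x1 := by positivity
    have hx2pos : 0 < x2 := by positivity
    have hx1δ : x1 < δ := by
      rw [hx1, div_lt_iff₀ hN1]
      have : u / δ < (N : ℝ) + 1 := lt_of_le_of_lt (by
        apply div_le_div_of_nonneg_right (le_max_left u v) hδpos.le) hNgt
      calc u = u / δ * δ := by field_simp
        _ < ((N : ℝ) + 1) * δ := by
            exact mul_lt_mul_of_pos_right this hδpos
        _ = δ * ((N : ℝ) + 1) := by ring
    have hx2δ : x2 < δ := by
      rw [hx2, div_lt_iff₀ hN1]
      have : v / δ < (N : ℝ) + 1 := lt_of_le_of_lt (by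
        apply div_le_div_of_nonneg_right (le_max_right u v) hδpos.le) hNgt
      calc v = v / δ * δ := by field_simp
        _ < ((N : ℝ) + 1) * δ := mul_lt_mul_of_pos_right this hδpos
        _ = δ * ((N : ℝ) + 1) := by ring
    have hNx1' : ((N : ℝ) + 1) * x1 = s.1 - r.1 := by rw [hx1]; field_simp; exact hu
    have hNx2' : ((N : ℝ) + 1) * x2 = r.2 - s.2 := by rw [hx2]; field_simp; exact hv
    have heq := h (r.1 - x1 / 2, r.2 - 3 / 2 * x2) x1 x2 hx1pos hx2pos N hNpos
    dsimp only at heq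
    have i1 : Set.Icc (r.1 - x1 / 2) (r.1 - x1 / 2 + x1) =
        Set.Icc (r.1 - x1 / 2) (r.1 + x1 / 2) := by congr 1; ring
    have i2 : Set.Icc (r.2 - 3 / 2 * x2 + x2) (r.2 - 3 / 2 * x2 + 2 * x2) =
        Set.Icc (r.2 - x2 / 2) (r.2 + x2 / 2) := by congr 1 <;> ring
    have e1 : r.1 - x1 / 2 + ((N : ℝ) + 1) * x1 = s.1 - x1 / 2 := by linear_combination hNx1'
    have e2 : r.1 - x1 / 2 + ((N : ℝ) + 2) * x1 = s.1 + x1 / 2 := by linear_combination hNx1'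
    have e3 : r.2 - 3 / 2 * x2 - (N : ℝ) * x2 = s.2 - x2 / 2 := by linear_combination -hNx2'
    have e4 : r.2 - 3 / 2 * x2 - ((N : ℝ) - 1) * x2 = s.2 + x2 / 2 := by
      linear_combination -hNx2'
    have i3 : Set.Icc (r.1 - x1 / 2 + ((N : ℝ) + 1) * x1) (r.1 - x1 / 2 + ((N : ℝ) + 2) * x1) =
        Set.Icc (s.1 - x1 / 2) (s.1 + x1 / 2) := by rw [e1, e2]
    have i4 : Set.Icc (r.2 - 3 / 2 * x2 - (N : ℝ) * x2) (r.2 - 3 / 2 * x2 - ((N : ℝ) - 1) * x2) =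
        Set.Icc (s.2 - x2 / 2) (s.2 + x2 / 2) := by rw [e3, e4]
    rw [i1, i2, i3, i4] at heq
    -- bounds
    have hbr : ∀ q ∈ Set.Icc (r.1 - x1 / 2) (r.1 + x1 / 2) ×ˢ
        Set.Icc (r.2 - x2 / 2) (r.2 + x2 / 2), |g q - g r| ≤ η := by
      intro q hq
      obtain ⟨hq1, hq2⟩ := hq
      rw [Set.mem_Icc] at hq1 hq2
      have hδ1 : δ ≤ δr := min_le_left _ _
      apply le_of_lt
      have : dist (g q) (g r) < η := by
        apply hr
        rw [Prod.dist_eq]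
        apply max_lt
        · rw [Real.dist_eq, abs_lt]
          constructor <;> [linarith [hq1.1, hx1δ, hx1pos]; linarith [hq1.2, hx1δ, hx1pos]]
        · rw [Real.dist_eq, abs_lt]
          constructor <;> [linarith [hq2.1, hx2δ, hx2pos]; linarith [hq2.2, hx2δ, hx2pos]]
      simpa [Real.dist_eq] using this
    have hbs : ∀ q ∈ Set.Icc (s.1 - x1 / 2) (s.1 + x1 / 2) ×ˢ
        Set.Icc (s.2 - x2 / 2) (s.2 + x2 / 2), |g q - g s| ≤ η := by
      intro q hq
      obtain ⟨hq1, hq2⟩ := hq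
      rw [Set.mem_Icc] at hq1 hq2
      have hδ2 : δ ≤ δs := min_le_right _ _
      apply le_of_lt
      have : dist (g q) (g s) < η := by
        apply hs
        rw [Prod.dist_eq]
        apply max_lt
        · rw [Real.dist_eq, abs_lt]
          constructor <;> [linarith [hq1.1, hx1δ, hx1pos]; linarith [hq1.2, hx1δ, hx1pos]]
        · rw [Real.dist_eq, abs_lt]
          constructor <;> [linarith [hq2.1, hx2δ, hx2pos]; linarith [hq2.2, hx2δ, hx2pos]]
      simpa [Real.dist_eq] using this
    have hle1 : r.1 - x1 / 2 ≤ r.1 + x1 / 2 := by linarith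
    have hle2 : r.2 - x2 / 2 ≤ r.2 + x2 / 2 := by linarith
    have hle3 : s.1 - x1 / 2 ≤ s.1 + x1 / 2 := by linarith
    have hle4 : s.2 - x2 / 2 ≤ s.2 + x2 / 2 := by linarith
    have hB1 := rect_integral_bound g hg _ _ _ _ η (g r) hle1 hle2 hbr
    have hB2 := rect_integral_bound g hg _ _ _ _ η (g s) hle3 hle4 hbs
    have hA1 : (r.1 + x1 / 2 - (r.1 - x1 / 2)) * (r.2 + x2 / 2 - (r.2 - x2 / 2)) = x1 * x2 := by
      ring
    have hA2 : (s.1 + x1 / 2 - (s.1 - x1 / 2)) * (s.2 + x2 / 2 - (s.2 - x2 / 2)) = x1 * x2 := by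
      ring
    rw [hA1] at hB1
    rw [hA2] at hB2
    set I := ∫ q in Set.Icc (s.1 - x1 / 2) (s.1 + x1 / 2) ×ˢ
        Set.Icc (s.2 - x2 / 2) (s.2 + x2 / 2), g q with hI
    rw [heq] at hB1
    have hApos : 0 < x1 * x2 := by positivity
    have habs : |g r - g s| * (x1 * x2) ≤ 2 * η * (x1 * x2) := by
      have : |g r * (x1 * x2) - g s * (x1 * x2)| ≤ 2 * η * (x1 * x2) := by
        calc |g r * (x1 * x2) - g s * (x1 * x2)|
            ≤ |I - g r * (x1 * x2)| + |I - g s * (x1 * x2)| := by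
              rw [abs_sub_comm (I) (g r * (x1 * x2))]
              calc _ = |(g r * (x1 * x2) - I) + (I - g s * (x1 * x2))| := by ring_nf
                _ ≤ _ := abs_add_le _ _
          _ ≤ η * (x1 * x2) + η * (x1 * x2) := add_le_add hB1 hB2
          _ = 2 * η * (x1 * x2) := by ring
      calc |g r - g s| * (x1 * x2) = |(g r - g s) * (x1 * x2)| := by
            rw [abs_mul, abs_of_pos hApos]
        _ = |g r * (x1 * x2) - g s * (x1 * x2)| := by ring_nf
        _ ≤ 2 * η * (x1 * x2) := this
    have h1 : |g r - g s| ≤ 2 * η := le_of_mul_le_mul_right (by linarith) hApos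
    rw [hη] at h1
    have : 0 < |g r - g s| := abs_pos.2 (sub_ne_zero.2 hne)
    linarith
  intro a b
  set c : ℝ × ℝ := (max a.1 b.1 + 1, min a.2 b.2 - 1) with hc
  have hac : g a = g c := key a c (by simp [hc]; linarith [le_max_left a.1 b.1])
    (by simp [hc]; linarith [min_le_left a.2 b.2])
  have hbc : g b = g c := key b c (by simp [hc]; linarith [le_max_right a.1 b.1])
    (by simp [hc]; linarith [min_le_right a.2 b.2])
  rw [hac, hbc]
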